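/- Let A and B be real symmetric positive definite n×n matrices and let 0 < ρ̂₀ ≤ ρ̂₁ be such that ρ̂₀ vᵀAv ≤ vᵀBv ≤ ρ̂₁ vᵀAv for all vectors v. Let q be a real polynomial, set r₀ := min over x ∈ [1/ρ̂₁, 1/ρ̂₀] of x·q(x) and r₁ := max over x ∈ [1/ρ̂₁, 1/ρ̂₀] of x·q(x). Then for every vector y, r₀ · yᵀA⁻¹y ≤ yᵀ B⁻¹ q(A B⁻¹) y ≤ r₁ · yᵀA⁻¹y. -/

import Mathlib

open Matrix Polynomial

private lemma aeval_conj_mat {m : ℕ} (C C' M : Matrix (Fin m) (Fin m) ℝ)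
    (h1 : C * C' = 1) (h2 : C' * C = 1) (q : Polynomial ℝ) :
    aeval (C * M * C') q = C * aeval M q * C' := by
  have hpow : ∀ k : ℕ, (C * M * C') ^ k = C * M ^ k * C' := by
    intro k
    induction k with
    | zero => simp [h1]
    | succ k ih =>
        rw [pow_succ, ih, pow_succ]
        calc C * M ^ k * C' * (C * M * C')
            = C * M ^ k * (C' * C) * (M * C') := by simp only [mul_assoc]
          _ = C * (M ^ k * M) * C' := by rw [h2, mul_one]; simp only [mul_assoc]
  induction q using Polynomial.induction_on' with
  | add p r hp hr => simp [map_add, hp, hr, Matrix.mul_add, Matrix.add_mul]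
  | monomial k c =>
      rw [aeval_monomial, aeval_monomial, hpow]
      simp only [← Algebra.smul_def, mul_smul_comm, smul_mul_assoc]

private lemma aeval_diagonal_mat {m : ℕ} (d : Fin m → ℝ) (p : Polynomial ℝ) :
    aeval (Matrix.diagonal d) p = diagonal (fun i => p.eval (d i)) := by
  have h := Polynomial.aeval_algHom_apply (Matrix.diagonalAlgHom (α := ℝ) ℝ) d p
  simp only [Matrix.diagonalAlgHom_apply] at h
  rw [h]
  refine congrArg diagonal (funext fun i => ?_)
  have h2 := Polynomial.aeval_algHom_apply (Pi.evalAlgHom ℝ (fun _ : Fin m => ℝ) i) d p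
  set_option linter.unnecessarySimpa false in
  simpa using h2.symm

private lemma dot_conj {m : ℕ} (S N : Matrix (Fin m) (Fin m) ℝ) (y : Fin m → ℝ) :
    y ⬝ᵥ ((Sᵀ * N * S) *ᵥ y) = (S *ᵥ y) ⬝ᵥ (N *ᵥ (S *ᵥ y)) := by
  rw [← mulVec_mulVec, ← mulVec_mulVec, dotProduct_mulVec, vecMul_transpose]

private lemma dot_conj_symm {m : ℕ} (S N : Matrix (Fin m) (Fin m) ℝ) (hS : Sᵀ = S)
    (y : Fin m → ℝ) :
    y ⬝ᵥ ((S * N * S) *ᵥ y) = (S *ᵥ y) ⬝ᵥ (N *ᵥ (S *ᵥ y)) := by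
  nth_rewrite 1 [← hS]
  exact dot_conj S N y

private lemma dot_diagonal_sum {m : ℕ} (d w : Fin m → ℝ) :
    w ⬝ᵥ (diagonal d *ᵥ w) = ∑ i, d i * (w i) ^ 2 := by
  simp only [dotProduct, mulVec_diagonal]
  exact Finset.sum_congr rfl (by intro i _; ring)

theorem rayleigh_quotient_polynomial_bounds (n : ℕ)
    (A B : Matrix (Fin n) (Fin n) ℝ) (hA : A.PosDef) (hB : B.PosDef)
    (ρ0 ρ1 : ℝ) (hρ0 : 0 < ρ0) (hρ01 : ρ0 ≤ ρ1)
    (hlow : ∀ v : Fin n → ℝ, ρ0 * (v ⬝ᵥ (A *ᵥ v)) ≤ v ⬝ᵥ (B *ᵥ v))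
    (hup : ∀ v : Fin n → ℝ, v ⬝ᵥ (B *ᵥ v) ≤ ρ1 * (v ⬝ᵥ (A *ᵥ v)))
    (q : Polynomial ℝ)
    (r0 r1 : ℝ)
    (hr0 : r0 = sInf ((fun x : ℝ => x * q.eval x) '' Set.Icc (1 / ρ1) (1 / ρ0)))
    (hr1 : r1 = sSup ((fun x : ℝ => x * q.eval x) '' Set.Icc (1 / ρ1) (1 / ρ0))) :
    ∀ y : Fin n → ℝ,
      r0 * (y ⬝ᵥ (A⁻¹ *ᵥ y)) ≤ y ⬝ᵥ ((B⁻¹ * aeval (A * B⁻¹) q) *ᵥ y) ∧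
      y ⬝ᵥ ((B⁻¹ * aeval (A * B⁻¹) q) *ᵥ y) ≤ r1 * (y ⬝ᵥ (A⁻¹ *ᵥ y)) := by
  have hρ1 : 0 < ρ1 := lt_of_lt_of_le hρ0 hρ01
  -- the square root S of A
  open scoped MatrixOrder in
  set S : Matrix (Fin n) (Fin n) ℝ := CFC.sqrt A with hSdef
  have hSS : S * S = A := by
    open scoped MatrixOrder in exact CFC.sqrt_mul_sqrt_self A hA.posSemidef.nonneg
  have hSherm : S.IsHermitian := by
    open scoped MatrixOrder in exact (CFC.sqrt_nonneg A).posSemidef.1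
  have hSt : Sᵀ = S := hSherm
  have hSu : IsUnit S.det := by
    have hdet : S.det * S.det = A.det := by rw [← det_mul, hSS]
    have hAdet : A.det ≠ 0 := hA.det_pos.ne'
    have hSdet : S.det ≠ 0 := fun h => hAdet (by rw [← hdet, h, mul_zero])
    exact hSdet.isUnit
  have hS1 : S * S⁻¹ = 1 := mul_nonsing_inv S hSu
  have hS1' : S⁻¹ * S = 1 := nonsing_inv_mul S hSu
  have hSti : (S⁻¹)ᵀ = S⁻¹ := by rw [transpose_nonsing_inv, hSt]
  have hBu : IsUnit B.det := (Matrix.isUnit_iff_isUnit_det B).1 hB.isUnit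
  have hB1 : B * B⁻¹ = 1 := mul_nonsing_inv B hBu
  have hB1' : B⁻¹ * B = 1 := nonsing_inv_mul B hBu
  -- the matrix X = S B⁻¹ S
  set Xm : Matrix (Fin n) (Fin n) ℝ := S * B⁻¹ * S with hXdef
  have hXherm : Xm.IsHermitian := by
    show Xmᴴ = Xm
    rw [hXdef, conjTranspose_mul, conjTranspose_mul, hSherm.eq, hB.inv.isHermitian.eq,
      ← mul_assoc]
  have hXpd : Xm.PosDef := by
    refine .of_dotProduct_mulVec_pos hXherm fun x hx => ?_
    have hx' : S *ᵥ x ≠ 0 := by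
      intro h
      apply hx
      have h2 := congrArg (fun w => S⁻¹ *ᵥ w) h
      simpa [mulVec_mulVec, hS1'] using h2
    have hpos := hB.inv.dotProduct_mulVec_pos hx'
    simpa [hXdef, dot_conj_symm S B⁻¹ hSt x] using hpos
  have hXherm' : Xm.IsHermitian := hXpd.1
  -- eigenvalues of X lie in [1/ρ1, 1/ρ0]
  have key : ∀ i, hXpd.1.eigenvalues i ∈ Set.Icc (1 / ρ1) (1 / ρ0) := by
    intro i
    set μ : ℝ := hXpd.1.eigenvalues i with hμdef
    set v : Fin n → ℝ := ⇑(hXpd.1.eigenvectorBasis i) with hvdef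
    have hμpos : 0 < μ := hXpd.eigenvalues_pos i
    have hXv : Xm *ᵥ v = μ • v := hXpd.1.mulVec_eigenvectorBasis i
    have hvv : v ⬝ᵥ v = 1 := by
      have h1 : ‖hXpd.1.eigenvectorBasis i‖ = 1 := hXpd.1.eigenvectorBasis.orthonormal.1 i
      have h2 : Real.sqrt (∑ j, v j ^ 2) = 1 := by
        rw [EuclideanSpace.norm_eq] at h1
        simp only [Real.norm_eq_abs, sq_abs] at h1
        exact h1
      have h3 : (∑ j, v j ^ 2) = 1 := by
        have h4 : (0:ℝ) ≤ ∑ j, v j ^ 2 := Finset.sum_nonneg fun j _ => sq_nonneg _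
        nlinarith [Real.sq_sqrt h4]
      simpa [dotProduct, pow_two] using h3
    have hYX : (S⁻¹ * B * S⁻¹) * (S * B⁻¹ * S) = 1 := by
      calc S⁻¹ * B * S⁻¹ * (S * B⁻¹ * S)
          = S⁻¹ * (B * ((S⁻¹ * S) * (B⁻¹ * S))) := by simp only [mul_assoc]
        _ = S⁻¹ * (B * (B⁻¹ * S)) := by rw [hS1', one_mul]
        _ = S⁻¹ * ((B * B⁻¹) * S) := by simp only [mul_assoc]
        _ = S⁻¹ * S := by rw [hB1, one_mul]
        _ = 1 := hS1'
    have hYv : (S⁻¹ * B * S⁻¹) *ᵥ v = μ⁻¹ • v := by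
      have h := congrArg (fun w => (S⁻¹ * B * S⁻¹) *ᵥ w) hXv
      simp only [hXdef] at h
      rw [mulVec_mulVec, hYX, one_mulVec, mulVec_smul] at h
      have h2 := congrArg (fun w => μ⁻¹ • w) h
      simp only [smul_smul, inv_mul_cancel₀ hμpos.ne', one_smul] at h2
      exact h2.symm
    have hBinner : v ⬝ᵥ ((S⁻¹ * B * S⁻¹) *ᵥ v) = μ⁻¹ := by
      rw [hYv]
      simp [hvv]
    have hSAS : S⁻¹ * A * S⁻¹ = 1 := by
      rw [← hSS]
      calc S⁻¹ * (S * S) * S⁻¹ = (S⁻¹ * S) * (S * S⁻¹) := by simp only [mul_assoc]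
        _ = 1 := by rw [hS1', hS1, one_mul]
    have hAinner : v ⬝ᵥ ((S⁻¹ * A * S⁻¹) *ᵥ v) = 1 := by rw [hSAS, one_mulVec, hvv]
    have huB : (S⁻¹ *ᵥ v) ⬝ᵥ (B *ᵥ (S⁻¹ *ᵥ v)) = μ⁻¹ := by
      rw [← dot_conj_symm S⁻¹ B hSti v]; exact hBinner
    have huA : (S⁻¹ *ᵥ v) ⬝ᵥ (A *ᵥ (S⁻¹ *ᵥ v)) = 1 := by
      rw [← dot_conj_symm S⁻¹ A hSti v]; exact hAinner
    have hlo := hlow (S⁻¹ *ᵥ v)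
    have hhi := hup (S⁻¹ *ᵥ v)
    rw [huA, huB] at hlo hhi
    constructor
    · rw [div_le_iff₀ hρ1]
      nlinarith [mul_inv_cancel₀ hμpos.ne']
    · rw [le_div_iff₀ hρ0]
      nlinarith [mul_inv_cancel₀ hμpos.ne']
  -- spectral decomposition of X
  set U : Matrix (Fin n) (Fin n) ℝ := (hXpd.1.eigenvectorUnitary : Matrix (Fin n) (Fin n) ℝ)
    with hUdef
  set V : Matrix (Fin n) (Fin n) ℝ := star U with hVdef
  have hUV : U * V = 1 := mem_unitaryGroup_iff.mp hXpd.1.eigenvectorUnitary.2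
  have hVU : V * U = 1 := mem_unitaryGroup_iff'.mp hXpd.1.eigenvectorUnitary.2
  have hVt : Vᵀ = U := by
    rw [hVdef]
    ext i j
    simp [Matrix.transpose_apply, Matrix.star_apply]
  set μ : Fin n → ℝ := hXpd.1.eigenvalues with hμsdef
  have hspec : Xm = U * diagonal μ * V := by
    have h := hXpd.1.spectral_theorem
    simpa using h
  -- the polynomial p(x) = x q(x)
  set p : Polynomial ℝ := Polynomial.X * q with hpdef
  have hpeval : ∀ x : ℝ, p.eval x = x * q.eval x := by
    intro x; rw [hpdef, eval_mul, eval_X]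
  set f : Fin n → ℝ := fun i => p.eval (μ i) with hfdef
  have haevalX : aeval Xm p = U * diagonal f * V := by
    rw [hspec, aeval_conj_mat U V _ hUV hVU, aeval_diagonal_mat]
  -- main matrix identity
  have hmain : B⁻¹ * aeval (A * B⁻¹) q = S⁻¹ * aeval Xm p * S⁻¹ := by
    have hconj : A * B⁻¹ = S * Xm * S⁻¹ := by
      have h : S * Xm * S⁻¹ = S * S * B⁻¹ * (S * S⁻¹) := by
        rw [hXdef]; simp only [mul_assoc]
      rw [h, hS1, mul_one, hSS]
    have h1 : aeval (A * B⁻¹) q = S * aeval Xm q * S⁻¹ := by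
      rw [hconj]; exact aeval_conj_mat S S⁻¹ Xm hS1 hS1' q
    have hXq : aeval Xm p = Xm * aeval Xm q := by
      rw [hpdef, _root_.map_mul, aeval_X]
    rw [h1, hXq, hXdef]
    calc B⁻¹ * (S * aeval (S * B⁻¹ * S) q * S⁻¹)
        = (1 : Matrix (Fin n) (Fin n) ℝ) * (B⁻¹ * (S * (aeval (S * B⁻¹ * S) q * S⁻¹))) := by
          simp only [one_mul, mul_assoc]
      _ = S⁻¹ * (S * B⁻¹ * S * aeval (S * B⁻¹ * S) q) * S⁻¹ := by
          rw [← hS1']; simp only [mul_assoc]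
  intro y
  -- reduce both quadratic forms to sums over eigenvalues
  have eqmid : y ⬝ᵥ ((B⁻¹ * aeval (A * B⁻¹) q) *ᵥ y) =
      ∑ i, f i * ((V *ᵥ (S⁻¹ *ᵥ y)) i) ^ 2 := by
    rw [hmain, dot_conj_symm S⁻¹ (aeval Xm p) hSti y, haevalX, ← hVt,
      dot_conj V (diagonal f) (S⁻¹ *ᵥ y), dot_diagonal_sum]
  have eqA : y ⬝ᵥ (A⁻¹ *ᵥ y) = ∑ i, ((V *ᵥ (S⁻¹ *ᵥ y)) i) ^ 2 := by
    have hAinv : A⁻¹ = S⁻¹ * 1 * S⁻¹ := by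
      rw [← hSS, Matrix.mul_inv_rev, mul_one]
    have h1 : y ⬝ᵥ (A⁻¹ *ᵥ y) = (S⁻¹ *ᵥ y) ⬝ᵥ ((1 : Matrix (Fin n) (Fin n) ℝ) *ᵥ (S⁻¹ *ᵥ y)) := by
      rw [hAinv, dot_conj_symm S⁻¹ 1 hSti y]
    have h2 : (S⁻¹ *ᵥ y) ⬝ᵥ ((1 : Matrix (Fin n) (Fin n) ℝ) *ᵥ (S⁻¹ *ᵥ y)) =
        (S⁻¹ *ᵥ y) ⬝ᵥ ((Vᵀ * 1 * V) *ᵥ (S⁻¹ *ᵥ y)) := by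
      rw [hVt, mul_one, hUV]
    rw [h1, h2, dot_conj V 1 (S⁻¹ *ᵥ y)]
    simp only [one_mulVec]
    simp [dotProduct, pow_two]
  -- bounds on f i
  have hcont : Continuous fun x : ℝ => x * q.eval x := continuous_id.mul q.continuous
  have hK : IsCompact ((fun x : ℝ => x * q.eval x) '' Set.Icc (1 / ρ1) (1 / ρ0)) :=
    isCompact_Icc.image hcont
  have hfmem : ∀ i, f i ∈ (fun x : ℝ => x * q.eval x) '' Set.Icc (1 / ρ1) (1 / ρ0) := by
    intro i
    exact ⟨μ i, key i, (hpeval (μ i)).symm⟩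
  have hfl : ∀ i, r0 ≤ f i := fun i => hr0 ▸ csInf_le hK.bddBelow (hfmem i)
  have hfu : ∀ i, f i ≤ r1 := fun i => hr1 ▸ le_csSup hK.bddAbove (hfmem i)
  constructor
  · rw [eqmid, eqA, Finset.mul_sum]
    exact Finset.sum_le_sum fun i _ => mul_le_mul_of_nonneg_right (hfl i) (sq_nonneg _)
  · rw [eqmid, eqA, Finset.mul_sum]
    exact Finset.sum_le_sum fun i _ => mul_le_mul_of_nonneg_right (hfu i) (sq_nonneg _)
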